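/- Let A ∈ 𝔤𝔩ₙ(𝕂) be a non-resonant diagonal matrix (eigenvalues λ₁,…,λₙ with Σ mᵢλᵢ − λⱼ ≠ 0 for all multi-indices m with |m| ≥ 2). Let X⁽¹⁾ = Σ λᵢ xᵢ ∂/∂xᵢ be the corresponding linear vector field. Then for every formal vector field Ỹ on 𝕂ⁿ whose Taylor expansion contains only terms of degree ≥ 2, there exists a formal vector field Z̃ with terms of degree ≥ 2 such that Ỹ = [X⁽¹⁾, Z̃]. -/

import Mathlib

noncomputable section

/-- The partial derivative `∂f/∂xᵢ` of a formal power series. -/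
def psDeriv {K : Type*} [Field K] {n : ℕ} (i : Fin n)
    (f : MvPowerSeries (Fin n) K) : MvPowerSeries (Fin n) K :=
  fun m => (m i + 1 : ℕ) • MvPowerSeries.coeff (R := K) (m + Finsupp.single i 1) f

open MvPowerSeries in
lemma coeff_X_mul' {K : Type*} [Field K] {n : ℕ} (i : Fin n)
    (φ : MvPowerSeries (Fin n) K) (m : Fin n →₀ ℕ) :
    MvPowerSeries.coeff (R := K) (m + Finsupp.single i 1) (X i * φ) =
      MvPowerSeries.coeff (R := K) m φ := by
  classical
  rw [coeff_mul, Finset.sum_eq_single (Finsupp.single i 1, m)]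
  · rw [coeff_X, if_pos rfl, one_mul]
  · rintro ⟨a, b⟩ hab hne
    rw [Finset.HasAntidiagonal.mem_antidiagonal] at hab
    rw [coeff_X]
    split_ifs with h
    · exfalso
      apply hne
      simp only at h
      subst h
      have : b = m := by
        have := hab
        simp only at this
        have : Finsupp.single i 1 + b = Finsupp.single i 1 + m := by
          rw [this, add_comm]
        exact add_left_cancel this
      simp [this]
    · exact zero_mul _
  · intro h
    exact absurd (Finset.HasAntidiagonal.mem_antidiagonal.2 (by simp [add_comm])) h

open MvPowerSeries in
lemma coeff_X_mul_zero {K : Type*} [Field K] {n : ℕ} (i : Fin n)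
    (φ : MvPowerSeries (Fin n) K) (m : Fin n →₀ ℕ) (hm : m i = 0) :
    MvPowerSeries.coeff (R := K) m (X i * φ) = 0 := by
  classical
  rw [coeff_mul, Finset.sum_eq_zero]
  rintro ⟨a, b⟩ hab
  rw [Finset.HasAntidiagonal.mem_antidiagonal] at hab
  rw [coeff_X]
  split_ifs with h
  · exfalso
    simp only at h
    subst h
    simp only at hab
    have h2 := DFunLike.congr_fun hab i
    rw [Finsupp.add_apply, Finsupp.single_eq_same, hm] at h2
    omega
  · exact zero_mul _

open MvPowerSeries in
lemma coeff_X_mul_psDeriv {K : Type*} [Field K] {n : ℕ} (i : Fin n)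
    (f : MvPowerSeries (Fin n) K) (m : Fin n →₀ ℕ) :
    MvPowerSeries.coeff (R := K) m (MvPowerSeries.X i * psDeriv i f) =
      (m i : K) * MvPowerSeries.coeff (R := K) m f := by
  classical
  rcases Nat.eq_zero_or_pos (m i) with h | h
  · rw [coeff_X_mul_zero i _ m h, h]; simp
  · have hm : m = (m - Finsupp.single i 1) + Finsupp.single i 1 := by
      ext t
      simp only [Finsupp.add_apply, Finsupp.tsub_apply, Finsupp.single_apply]
      by_cases ht : i = t
      · subst ht; simp; omega
      · simp [ht]
    rw [hm, coeff_X_mul' i _ _, MvPowerSeries.coeff_apply, psDeriv]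
    have h2 : (m - Finsupp.single i 1 : Fin n →₀ ℕ) i + 1 = m i := by
      rw [Finsupp.tsub_apply, Finsupp.single_eq_same]; omega
    rw [← hm]
    simp only [h2]
    rw [nsmul_eq_mul]

theorem poincare_dulac_nonresonant {K : Type*} [Field K] {n : ℕ}
    (lam : Fin n → K)
    (hres : ∀ m : Fin n →₀ ℕ, 2 ≤ m.sum (fun _ e => e) → ∀ j : Fin n,
      (∑ i, (m i : K) * lam i) - lam j ≠ 0)
    (Y : Fin n → MvPowerSeries (Fin n) K)
    (hY : ∀ (j : Fin n) (m : Fin n →₀ ℕ), m.sum (fun _ e => e) < 2 →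
      MvPowerSeries.coeff (R := K) m (Y j) = 0) :
    ∃ Z : Fin n → MvPowerSeries (Fin n) K,
      (∀ (j : Fin n) (m : Fin n →₀ ℕ), m.sum (fun _ e => e) < 2 →
        MvPowerSeries.coeff (R := K) m (Z j) = 0) ∧
      ∀ j : Fin n,
        Y j = (∑ i, MvPowerSeries.C (σ := Fin n) (R := K) (lam i) *
                (MvPowerSeries.X i * psDeriv i (Z j)))
              - MvPowerSeries.C (σ := Fin n) (R := K) (lam j) * Z j := by
  classical
  set Z : Fin n → MvPowerSeries (Fin n) K := fun j m =>
    if 2 ≤ m.sum (fun _ e => e) then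
      MvPowerSeries.coeff (R := K) m (Y j) / ((∑ i, (m i : K) * lam i) - lam j)
    else 0 with hZ
  have hZcoeff : ∀ j m, MvPowerSeries.coeff (R := K) m (Z j) =
      if 2 ≤ m.sum (fun _ e => e) then
        MvPowerSeries.coeff (R := K) m (Y j) / ((∑ i, (m i : K) * lam i) - lam j)
      else 0 := fun j m => rfl
  refine ⟨Z, fun j m hm => by rw [hZcoeff]; rw [if_neg (by omega)], fun j => ?_⟩
  apply MvPowerSeries.ext
  intro m
  rw [map_sub, map_sum]
  have hsum : ∀ i : Fin n, MvPowerSeries.coeff (R := K) m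
      (MvPowerSeries.C (σ := Fin n) (R := K) (lam i) * (MvPowerSeries.X i * psDeriv i (Z j)))
      = lam i * ((m i : K) * MvPowerSeries.coeff (R := K) m (Z j)) := by
    intro i
    rw [MvPowerSeries.coeff_C_mul, coeff_X_mul_psDeriv]
  simp only [hsum, MvPowerSeries.coeff_C_mul]
  have key : (∑ i, lam i * ((m i : K) * MvPowerSeries.coeff (R := K) m (Z j)))
      - lam j * MvPowerSeries.coeff (R := K) m (Z j)
      = ((∑ i, (m i : K) * lam i) - lam j) * MvPowerSeries.coeff (R := K) m (Z j) := by
    rw [sub_mul, Finset.sum_mul]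
    congr 1
    apply Finset.sum_congr rfl
    intro i _
    ring
  rw [key, hZcoeff]
  by_cases hm : 2 ≤ m.sum (fun _ e => e)
  · rw [if_pos hm, mul_div_cancel₀ _ (hres m hm j)]
  · rw [if_neg hm, mul_zero, hY j m (by omega)]

end
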